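/- Let g : U → ℝ be C² with positive definite Hessian on an open convex set U ⊆ ℝⁿ, φ(x,y) = g(y) + (x−y)·∇g(y), and for fixed x ∈ U suppose ∫_U e^{2Nφ(x,y)} dy < ∞ for all N ≥ 1. Then for any compact set K ⊆ U with x ∉ K, the normalized density e^{2Nφ(x,y)} / ∫_U e^{2Nφ(x,y')} dy' tends to 0 uniformly on K as N → ∞; equivalently, sup_{y∈K} φ(x,y) < φ(x,x) and the mass concentrates at y = x. -/

import Mathlib

open MeasureTheory Filter
open scoped RealInnerProductSpace

set_option maxHeartbeats 1000000

open MeasureTheory Filter Set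
open scoped RealInnerProductSpace Topology

lemma strict_tangent_ineq {n : ℕ} {U : Set (EuclideanSpace ℝ (Fin n))}
    (hU : IsOpen U) (hconv : Convex ℝ U)
    {g : EuclideanSpace ℝ (Fin n) → ℝ}
    {g' : EuclideanSpace ℝ (Fin n) → EuclideanSpace ℝ (Fin n)}
    {H : EuclideanSpace ℝ (Fin n) → EuclideanSpace ℝ (Fin n) →L[ℝ] EuclideanSpace ℝ (Fin n)}
    (hgrad : ∀ y ∈ U, HasGradientAt g (g' y) y)
    (hhess : ∀ y ∈ U, HasFDerivAt g' (H y) y)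
    (hposdef : ∀ y ∈ U, ∀ v : EuclideanSpace ℝ (Fin n), v ≠ 0 → 0 < ⟪H y v, v⟫)
    {x y : EuclideanSpace ℝ (Fin n)} (hx : x ∈ U) (hy : y ∈ U) (hne : y ≠ x) :
    g y + ⟪x - y, g' y⟫ < g x := by
  set v := x - y with hv
  have hv0 : v ≠ 0 := sub_ne_zero.mpr (Ne.symm hne)
  set γ : ℝ → EuclideanSpace ℝ (Fin n) := fun t => y + t • v with hγ
  have hγ0 : γ 0 = y := by simp [hγ]
  have hγ1 : γ 1 = x := by simp [hγ, hv]
  have hmem : ∀ t ∈ Icc (0:ℝ) 1, γ t ∈ U := fun t ht =>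
    hconv.add_smul_sub_mem hy hx ht
  have hγd : ∀ t : ℝ, HasDerivAt γ v t := fun t => by
    have := ((hasDerivAt_id t).smul_const v).const_add y
    rw [one_smul] at this
    exact this
  set h' : ℝ → ℝ := fun t => ⟪g' (γ t), v⟫ with hh'
  have hd : ∀ t : ℝ, γ t ∈ U → HasDerivAt (fun t => g (γ t)) (h' t) t := by
    intro t ht
    have := ((hgrad (γ t) ht).hasFDerivAt).comp_hasDerivAt t (hγd t)
    simp at this
    exact this
  have hd' : ∀ t : ℝ, γ t ∈ U → HasDerivAt h' ⟪H (γ t) v, v⟫ t := by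
    intro t ht
    have hp : HasDerivAt (fun t => g' (γ t)) (H (γ t) v) t :=
      (hhess (γ t) ht).comp_hasDerivAt t (hγd t)
    have := hp.inner ℝ (hasDerivAt_const t v)
    simpa using this
  -- continuity of h on Icc
  have hcont : ContinuousOn (fun t => g (γ t)) (Icc (0:ℝ) 1) := fun t ht =>
    ((hd t (hmem t ht)).continuousAt).continuousWithinAt
  have hcont' : ContinuousOn h' (Icc (0:ℝ) 1) := fun t ht =>
    ((hd' t (hmem t ht)).continuousAt).continuousWithinAt
  -- h' strictly monotone on Icc 0 1
  have hmono : StrictMonoOn h' (Icc (0:ℝ) 1) := by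
    apply strictMonoOn_of_deriv_pos (convex_Icc 0 1) hcont'
    intro t ht
    rw [interior_Icc] at ht
    have htm : γ t ∈ U := hmem t ⟨le_of_lt ht.1, le_of_lt ht.2⟩
    rw [(hd' t htm).deriv]
    exact hposdef (γ t) htm v hv0
  obtain ⟨c, hc, hslope⟩ := exists_hasDerivAt_eq_slope (fun t => g (γ t)) h'
    one_pos hcont (fun t ht => hd t (hmem t ⟨le_of_lt ht.1, le_of_lt ht.2⟩))
  have h0c : h' 0 < h' c :=
    hmono ⟨le_refl 0, zero_le_one⟩ ⟨le_of_lt hc.1, le_of_lt hc.2⟩ hc.1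
  have : h' c = g x - g y := by
    rw [hslope]; simp [hγ0, hγ1]
  rw [this] at h0c
  have hin : ⟪x - y, g' y⟫ = h' 0 := by
    simp only [hh', hγ0, ← hv]
    exact real_inner_comm _ _
  linarith [h0c, hin.le, hin.ge]

/-- For `g` C² with positive definite Hessian on an open convex `U`,
`φ(x,y) = g(y) + ⟪x - y, ∇g(y)⟫` (so `φ(x,x) = g(x)`), and `e^{2Nφ(x,·)}` integrable on `U`
for all `N ≥ 1`, the normalized density `e^{2Nφ(x,y)} / ∫_U e^{2Nφ(x,y')} dy'` tends to `0`
uniformly on any compact `K ⊆ U` with `x ∉ K`; moreover `φ(x,y) < φ(x,x)` on `K`. -/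
theorem density_concentration {n : ℕ} (U : Set (EuclideanSpace ℝ (Fin n)))
    (hU : IsOpen U) (hconv : Convex ℝ U)
    (g : EuclideanSpace ℝ (Fin n) → ℝ)
    (g' : EuclideanSpace ℝ (Fin n) → EuclideanSpace ℝ (Fin n))
    (H : EuclideanSpace ℝ (Fin n) → EuclideanSpace ℝ (Fin n) →L[ℝ] EuclideanSpace ℝ (Fin n))
    (hg : ContDiffOn ℝ 2 g U)
    (hgrad : ∀ y ∈ U, HasGradientAt g (g' y) y)
    (hhess : ∀ y ∈ U, HasFDerivAt g' (H y) y)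
    (hposdef : ∀ y ∈ U, ∀ v : EuclideanSpace ℝ (Fin n), v ≠ 0 → 0 < ⟪H y v, v⟫)
    (x : EuclideanSpace ℝ (Fin n)) (hx : x ∈ U)
    (hint : ∀ N : ℕ, 1 ≤ N →
      IntegrableOn (fun y => Real.exp (2 * (N : ℝ) * (g y + ⟪x - y, g' y⟫))) U)
    (K : Set (EuclideanSpace ℝ (Fin n)))
    (hK : IsCompact K) (hKU : K ⊆ U) (hxK : x ∉ K) :
    (∀ y ∈ K, g y + ⟪x - y, g' y⟫ < g x) ∧
    TendstoUniformlyOn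
      (fun (N : ℕ) (y : EuclideanSpace ℝ (Fin n)) =>
        Real.exp (2 * (N : ℝ) * (g y + ⟪x - y, g' y⟫)) /
          ∫ y' in U, Real.exp (2 * (N : ℝ) * (g y' + ⟪x - y', g' y'⟫)))
      0 atTop K := by
  set φ : EuclideanSpace ℝ (Fin n) → ℝ := fun y => g y + ⟪x - y, g' y⟫ with hφ
  have hlt : ∀ y ∈ K, φ y < g x := fun y hy =>
    strict_tangent_ineq hU hconv hgrad hhess hposdef hx (hKU hy)
      (fun h => hxK (h ▸ hy))
  refine ⟨hlt, ?_⟩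
  rcases K.eq_empty_or_nonempty with rfl | hKne
  · exact tendstoUniformlyOn_empty
  -- continuity of φ on U
  have hφcont : ContinuousOn φ U := by
    have hgc : ContinuousOn g U := fun y hy =>
      (hgrad y hy).differentiableAt.continuousAt.continuousWithinAt
    have hg'c : ContinuousOn g' U := fun y hy =>
      (hhess y hy).differentiableAt.continuousAt.continuousWithinAt
    exact hgc.add ((continuousOn_const.sub continuousOn_id).inner hg'c)
  -- maximum of φ on K
  obtain ⟨y₀, hy₀K, hy₀max⟩ := hK.exists_isMaxOn hKne (hφcont.mono hKU)
  set M := φ y₀ with hM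
  have hMlt : M < g x := hlt y₀ hy₀K
  set ε : ℝ := (g x - M) / 2 with hε
  have hεpos : 0 < ε := by simp [hε]; linarith
  set c : ℝ := g x - ε with hc
  have hMc : M - c = -ε := by rw [hc, hε]; ring
  -- ball around x where φ > c
  have hφx : φ x = g x := by simp [hφ]
  have hev : ∀ᶠ z in 𝓝 x, c < φ z ∧ z ∈ U := by
    have h1 : ∀ᶠ z in 𝓝 x, c < φ z := by
      have hca := (hφcont x hx).continuousAt (hU.mem_nhds hx)
      exact hca.eventually_const_lt (show c < φ x by rw [hφx, hc]; linarith)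
    exact h1.and (hU.eventually_mem hx)
  obtain ⟨δ, hδpos, hball⟩ := Metric.eventually_nhds_iff_ball.mp hev
  set B := Metric.ball x δ with hB
  set V : ℝ := (volume B).toReal with hV
  have hVpos : 0 < V := by
    rw [hV]
    exact ENNReal.toReal_pos (Metric.measure_ball_pos volume x hδpos).ne'
      (measure_ball_lt_top).ne
  -- lower bound for the integral
  have hlow : ∀ N : ℕ, 1 ≤ N →
      Real.exp (2 * N * c) * V ≤ ∫ y in U, Real.exp (2 * (N : ℝ) * φ y) := by
    intro N hN
    have hBU : B ⊆ U := fun z hz => (hball z hz).2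
    have hintB : IntegrableOn (fun y => Real.exp (2 * (N : ℝ) * φ y)) B :=
      (hint N hN).mono_set hBU
    have h1 : Real.exp (2 * N * c) * V ≤ ∫ y in B, Real.exp (2 * (N : ℝ) * φ y) := by
      rw [hV, ← measureReal_def]
      apply setIntegral_ge_of_const_le_real measurableSet_ball measure_ball_lt_top.ne
      · intro z hz
        apply Real.exp_le_exp.mpr
        have : c ≤ φ z := (hball z hz).1.le
        have h2N : (0:ℝ) ≤ 2 * N := by positivity
        exact mul_le_mul_of_nonneg_left this h2N
      · exact hintB
    have h2 : ∫ y in B, Real.exp (2 * (N : ℝ) * φ y) ≤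
        ∫ y in U, Real.exp (2 * (N : ℝ) * φ y) := by
      apply setIntegral_mono_set (hint N hN)
      · exact Filter.Eventually.of_forall fun y => (Real.exp_pos _).le
      · exact hBU.eventuallyLE
    linarith
  -- uniform convergence
  rw [Metric.tendstoUniformlyOn_iff]
  intro ε' hε'
  have hb : Tendsto (fun N : ℕ => Real.exp (2 * N * (M - c)) / V) atTop (𝓝 0) := by
    have h1 : Tendsto (fun N : ℕ => 2 * (N:ℝ) * (M - c)) atTop atBot := by
      have : Tendsto (fun N : ℕ => (N:ℝ) * (2 * (M - c))) atTop atBot := by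
        apply Tendsto.atTop_mul_const_of_neg (by rw [hMc]; linarith)
          tendsto_natCast_atTop_atTop
      convert this using 2 with N
      ring
    have := (Real.tendsto_exp_atBot.comp h1).div_const V
    simpa using this
  filter_upwards [hb.eventually_lt_const hε', eventually_ge_atTop 1] with N hNb hN1 y hy
  have hIpos : 0 < ∫ y' in U, Real.exp (2 * (N : ℝ) * φ y') :=
    lt_of_lt_of_le (by positivity) (hlow N hN1)
  have hnum : Real.exp (2 * (N:ℝ) * φ y) ≤ Real.exp (2 * (N:ℝ) * M) := by
    apply Real.exp_le_exp.mpr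
    have : φ y ≤ M := hy₀max hy
    have h2N : (0:ℝ) ≤ 2 * N := by positivity
    exact mul_le_mul_of_nonneg_left this h2N
  have hF : Real.exp (2 * (N:ℝ) * φ y) / (∫ y' in U, Real.exp (2 * (N : ℝ) * φ y')) ≤
      Real.exp (2 * N * (M - c)) / V := by
    have step : Real.exp (2 * (N:ℝ) * φ y) / (∫ y' in U, Real.exp (2 * (N : ℝ) * φ y')) ≤
        Real.exp (2 * (N:ℝ) * M) / (Real.exp (2 * N * c) * V) := by
      apply div_le_div₀ (Real.exp_pos _).le hnum (by positivity) (hlow N hN1)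
    calc _ ≤ Real.exp (2 * (N:ℝ) * M) / (Real.exp (2 * N * c) * V) := step
      _ = Real.exp (2 * N * (M - c)) / V := by
          rw [show (2 * (N:ℝ) * (M - c)) = 2 * N * M - 2 * N * c by ring,
            Real.exp_sub, div_div]
  have hFnn : 0 ≤ Real.exp (2 * (N:ℝ) * φ y) /
      (∫ y' in U, Real.exp (2 * (N : ℝ) * φ y')) := by positivity
  have : dist ((0 : EuclideanSpace ℝ (Fin n) → ℝ) y)
      (Real.exp (2 * (N:ℝ) * φ y) / (∫ y' in U, Real.exp (2 * (N : ℝ) * φ y'))) =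
      Real.exp (2 * (N:ℝ) * φ y) / (∫ y' in U, Real.exp (2 * (N : ℝ) * φ y')) := by
    simp [Real.dist_eq, abs_of_nonneg hFnn]
  calc dist _ _ = _ := this
    _ ≤ Real.exp (2 * N * (M - c)) / V := hF
    _ < ε' := hNb
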